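/- The braiding c_{M,N}(m⊗n) = ν(n₍₀₎) ⊗ B⁻¹(n₍₁₎)·μ⁻¹(m) is bijective, with inverse c_{M,N}⁻¹(n⊗m) = B⁻¹(S(n₍₁₎))·μ⁻¹(m) ⊗ ν(n₍₀₎). -/
import Mathlib


open TensorProduct

/-- A monoidal Hom-Hopf algebra (with bijective antipode) over a field `k`. -/
structure HomHopf (k : Type*) [Field k] (H : Type*) [AddCommGroup H] [Module k H] where
  mul : H →ₗ[k] H →ₗ[k] H
  one : H
  a : H ≃ₗ[k] H
  comul : H →ₗ[k] H ⊗[k] H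
  counit : H →ₗ[k] k
  S : H ≃ₗ[k] H
  hom_assoc : ∀ x y z : H, mul (a x) (mul y z) = mul (mul x y) (a z)
  a_mul : ∀ x y : H, a (mul x y) = mul (a x) (a y)
  mul_one' : ∀ x : H, mul x one = a x
  one_mul' : ∀ x : H, mul one x = a x
  a_one : a one = one
  hom_coassoc : (TensorProduct.map a.symm.toLinearMap comul).comp comul
      = (TensorProduct.assoc k H H H).toLinearMap.comp
          ((TensorProduct.map comul a.symm.toLinearMap).comp comul)
  comul_a : ∀ x : H, comul (a x) = TensorProduct.map a.toLinearMap a.toLinearMap (comul x)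
  counit_comul : ∀ x : H,
    (TensorProduct.lid k H) ((TensorProduct.map counit LinearMap.id) (comul x)) = a.symm x
  comul_counit : ∀ x : H,
    (TensorProduct.rid k H) ((TensorProduct.map LinearMap.id counit) (comul x)) = a.symm x
  counit_a : ∀ x : H, counit (a x) = counit x
  comul_mul : ∀ x y : H, comul (mul x y)
      = (TensorProduct.map (TensorProduct.lift mul) (TensorProduct.lift mul))
          ((TensorProduct.tensorTensorTensorComm k H H H H) (comul x ⊗ₜ[k] comul y))
  comul_one : comul one = one ⊗ₜ[k] one
  counit_mul : ∀ x y : H, counit (mul x y) = counit x * counit y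
  counit_one : counit one = 1
  S_a : ∀ x : H, S (a x) = a (S x)
  antipode_left : ∀ x : H,
    (TensorProduct.lift mul) ((TensorProduct.map S.toLinearMap LinearMap.id) (comul x))
      = counit x • one
  antipode_right : ∀ x : H,
    (TensorProduct.lift mul) ((TensorProduct.map LinearMap.id S.toLinearMap) (comul x))
      = counit x • one

/-- A monoidal Hom-Hopf algebra automorphism. -/
structure IsHomHopfAuto {k : Type*} [Field k] {H : Type*} [AddCommGroup H] [Module k H]
    (HH : HomHopf k H) (f : H ≃ₗ[k] H) : Prop where
  map_mul : ∀ x y : H, f (HH.mul x y) = HH.mul (f x) (f y)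
  map_one : f HH.one = HH.one
  map_comul : ∀ x : H, HH.comul (f x)
      = TensorProduct.map f.toLinearMap f.toLinearMap (HH.comul x)
  map_counit : ∀ x : H, HH.counit (f x) = HH.counit x
  map_a : ∀ x : H, f (HH.a x) = HH.a (f x)

/-- A left-right (A,B)-Yetter-Drinfeld Hom-module over `HH`. -/
structure YDModule {k : Type*} [Field k] {H : Type*} [AddCommGroup H] [Module k H]
    (HH : HomHopf k H) (A B : H ≃ₗ[k] H)
    (M : Type*) [AddCommGroup M] [Module k M] where
  act : H →ₗ[k] M →ₗ[k] M
  coact : M →ₗ[k] M ⊗[k] H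
  mu : M ≃ₗ[k] M
  hom_act : ∀ (h g : H) (m : M), act (HH.a h) (act g m) = act (HH.mul h g) (mu m)
  mu_act : ∀ (h : H) (m : M), mu (act h m) = act (HH.a h) (mu m)
  one_act : ∀ m : M, act HH.one m = mu m
  hom_coact : (TensorProduct.map mu.symm.toLinearMap HH.comul).comp coact
      = (TensorProduct.assoc k M H H).toLinearMap.comp
          ((TensorProduct.map coact HH.a.symm.toLinearMap).comp coact)
  coact_mu : ∀ m : M, coact (mu m)
      = TensorProduct.map mu.toLinearMap HH.a.toLinearMap (coact m)
  coact_counit : ∀ m : M,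
    (TensorProduct.rid k M) ((TensorProduct.map LinearMap.id HH.counit) (coact m)) = mu.symm m
  compat : ∀ (h : H) (m : M) (n : ℕ) (h1 h2 : Fin n → H),
      HH.comul h = ∑ i, h1 i ⊗ₜ[k] h2 i →
      ∀ (p : ℕ) (h21 h22 : Fin n → Fin p → H),
      (∀ i, HH.comul (h2 i) = ∑ j, h21 i j ⊗ₜ[k] h22 i j) →
      ∀ (q : ℕ) (m0 : Fin q → M) (m1 : Fin q → H),
      coact m = ∑ l, m0 l ⊗ₜ[k] m1 l →
      coact (act h m) = ∑ i, ∑ j, ∑ l,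
        act (HH.a (h21 i j)) (m0 l) ⊗ₜ[k]
          HH.mul (HH.mul (B (h22 i j)) (HH.a.symm (m1 l))) (A (HH.S.symm (h1 i)))


section AuxLemmas

variable {k : Type*} [Field k] {H : Type*} [AddCommGroup H] [Module k H]
  {M : Type*} [AddCommGroup M] [Module k M] {N : Type*} [AddCommGroup N] [Module k N]

private lemma exists_fin_rep (z : M ⊗[k] N) :
    ∃ (q : ℕ) (f : Fin q → M) (g : Fin q → N), z = ∑ i, f i ⊗ₜ[k] g i := by
  induction z using TensorProduct.induction_on with
  | zero => exact ⟨0, Fin.elim0, Fin.elim0, by simp⟩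
  | tmul x y => exact ⟨1, fun _ => x, fun _ => y, by simp⟩
  | add x y hx hy =>
    obtain ⟨q1, f1, g1, h1⟩ := hx
    obtain ⟨q2, f2, g2, h2⟩ := hy
    refine ⟨q1 + q2, Fin.append f1 f2, Fin.append g1 g2, ?_⟩
    rw [h1, h2, Fin.sum_univ_add]
    simp [Fin.append_left, Fin.append_right]

private noncomputable def auxE {HH : HomHopf k H} {A B : H ≃ₗ[k] H} (YM : YDModule HH A B M) (m : M) :
    H →ₗ[k] M :=
  (YM.act ∘ₗ B.symm.toLinearMap).flip (YM.mu.symm m)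

private lemma auxE_apply {HH : HomHopf k H} {A B : H ≃ₗ[k] H} (YM : YDModule HH A B M)
    (m : M) (h : H) : auxE YM m h = YM.act (B.symm h) (YM.mu.symm m) := rfl

private noncomputable def auxW (HH : HomHopf k H) : H ⊗[k] H →ₗ[k] H :=
  TensorProduct.lift HH.mul ∘ₗ TensorProduct.map HH.S.toLinearMap LinearMap.id

private lemma auxW_comul (HH : HomHopf k H) (h : H) :
    auxW HH (HH.comul h) = HH.counit h • HH.one := HH.antipode_left h

private lemma auxW_tmul (HH : HomHopf k H) (h g : H) :
    auxW HH (h ⊗ₜ[k] g) = HH.mul (HH.S h) g := rfl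

private noncomputable def auxW2 (HH : HomHopf k H) : H ⊗[k] H →ₗ[k] H :=
  TensorProduct.lift HH.mul ∘ₗ TensorProduct.map LinearMap.id HH.S.toLinearMap

private lemma auxW2_comul (HH : HomHopf k H) (h : H) :
    auxW2 HH (HH.comul h) = HH.counit h • HH.one := HH.antipode_right h

private lemma auxW2_tmul (HH : HomHopf k H) (h g : H) :
    auxW2 HH (h ⊗ₜ[k] g) = HH.mul h (HH.S g) := rfl

private noncomputable def auxXi' {HH : HomHopf k H} {A B C D : H ≃ₗ[k] H} (YM : YDModule HH A B M)
    (YN : YDModule HH C D N) (m : M) : N ⊗[k] (H ⊗[k] H) →ₗ[k] M ⊗[k] N :=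
  (TensorProduct.comm k N M).toLinearMap ∘ₗ
    TensorProduct.map (YN.mu.toLinearMap ∘ₗ YN.mu.toLinearMap) (auxE YM m ∘ₗ auxW HH)

private lemma auxXi'_apply {HH : HomHopf k H} {A B C D : H ≃ₗ[k] H} (YM : YDModule HH A B M)
    (YN : YDModule HH C D N) (m : M) (y : N) (t : H ⊗[k] H) :
    auxXi' YM YN m (y ⊗ₜ[k] t) = auxE YM m (auxW HH t) ⊗ₜ[k] YN.mu (YN.mu y) := by
  simp [auxXi']

private noncomputable def auxXi {HH : HomHopf k H} {A B C D : H ≃ₗ[k] H} (YM : YDModule HH A B M)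
    (YN : YDModule HH C D N) (m : M) : (N ⊗[k] H) ⊗[k] H →ₗ[k] M ⊗[k] N :=
  auxXi' YM YN m ∘ₗ (TensorProduct.assoc k N H H).toLinearMap

private lemma auxXi_assoc_symm {HH : HomHopf k H} {A B C D : H ≃ₗ[k] H}
    (YM : YDModule HH A B M) (YN : YDModule HH C D N) (m : M) (t : N ⊗[k] (H ⊗[k] H)) :
    auxXi YM YN m ((TensorProduct.assoc k N H H).symm t) = auxXi' YM YN m t := by
  simp [auxXi]

private lemma auxXi_apply {HH : HomHopf k H} {A B C D : H ≃ₗ[k] H} (YM : YDModule HH A B M)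
    (YN : YDModule HH C D N) (m : M) (y : N) (h g : H) :
    auxXi YM YN m ((y ⊗ₜ[k] h) ⊗ₜ[k] g)
      = auxE YM m (HH.mul (HH.S h) g) ⊗ₜ[k] YN.mu (YN.mu y) := by
  simp [auxXi, auxXi'_apply, auxW_tmul]

private noncomputable def auxXi2' {HH : HomHopf k H} {A B C D : H ≃ₗ[k] H} (YM : YDModule HH A B M)
    (YN : YDModule HH C D N) (m : M) : N ⊗[k] (H ⊗[k] H) →ₗ[k] N ⊗[k] M :=
  TensorProduct.map (YN.mu.toLinearMap ∘ₗ YN.mu.toLinearMap) (auxE YM m ∘ₗ auxW2 HH)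

private lemma auxXi2'_apply {HH : HomHopf k H} {A B C D : H ≃ₗ[k] H} (YM : YDModule HH A B M)
    (YN : YDModule HH C D N) (m : M) (y : N) (t : H ⊗[k] H) :
    auxXi2' YM YN m (y ⊗ₜ[k] t) = YN.mu (YN.mu y) ⊗ₜ[k] auxE YM m (auxW2 HH t) := by
  simp [auxXi2']

private noncomputable def auxXi2 {HH : HomHopf k H} {A B C D : H ≃ₗ[k] H} (YM : YDModule HH A B M)
    (YN : YDModule HH C D N) (m : M) : (N ⊗[k] H) ⊗[k] H →ₗ[k] N ⊗[k] M :=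
  auxXi2' YM YN m ∘ₗ (TensorProduct.assoc k N H H).toLinearMap

private lemma auxXi2_assoc_symm {HH : HomHopf k H} {A B C D : H ≃ₗ[k] H}
    (YM : YDModule HH A B M) (YN : YDModule HH C D N) (m : M) (t : N ⊗[k] (H ⊗[k] H)) :
    auxXi2 YM YN m ((TensorProduct.assoc k N H H).symm t) = auxXi2' YM YN m t := by
  simp [auxXi2]

private lemma auxXi2_apply {HH : HomHopf k H} {A B C D : H ≃ₗ[k] H} (YM : YDModule HH A B M)
    (YN : YDModule HH C D N) (m : M) (y : N) (h g : H) :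
    auxXi2 YM YN m ((y ⊗ₜ[k] h) ⊗ₜ[k] g)
      = YN.mu (YN.mu y) ⊗ₜ[k] auxE YM m (HH.mul h (HH.S g)) := by
  simp [auxXi2, auxXi2'_apply, auxW2_tmul]

end AuxLemmas

/-- Lemma 3.6: the braiding c_{M,N}(m⊗n) = ν(n₍₀₎) ⊗ B⁻¹(n₍₁₎)·μ⁻¹(m) is bijective,
with inverse c⁻¹(n⊗m) = B⁻¹(S(n₍₁₎))·μ⁻¹(m) ⊗ ν(n₍₀₎). -/
theorem stmt_13 {k : Type*} [Field k] {H : Type*} [AddCommGroup H] [Module k H]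
    {M : Type*} [AddCommGroup M] [Module k M] {N : Type*} [AddCommGroup N] [Module k N]
    (HH : HomHopf k H) (A B C D : H ≃ₗ[k] H)
    (hA : IsHomHopfAuto HH A) (hB : IsHomHopfAuto HH B)
    (hC : IsHomHopfAuto HH C) (hD : IsHomHopfAuto HH D)
    (YM : YDModule HH A B M) (YN : YDModule HH C D N)
    (c : (M ⊗[k] N) →ₗ[k] (N ⊗[k] M))
    (hc : ∀ (m : M) (x : N) (q : ℕ) (n0 : Fin q → N) (n1 : Fin q → H),
      YN.coact x = ∑ l, n0 l ⊗ₜ[k] n1 l →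
      c (m ⊗ₜ[k] x) = ∑ l, YN.mu (n0 l) ⊗ₜ[k] YM.act (B.symm (n1 l)) (YM.mu.symm m))
    (d : (N ⊗[k] M) →ₗ[k] (M ⊗[k] N))
    (hd : ∀ (x : N) (m : M) (q : ℕ) (n0 : Fin q → N) (n1 : Fin q → H),
      YN.coact x = ∑ l, n0 l ⊗ₜ[k] n1 l →
      d (x ⊗ₜ[k] m)
        = ∑ l, YM.act (B.symm (HH.S (n1 l))) (YM.mu.symm m) ⊗ₜ[k] YN.mu (n0 l)) :
    Function.Bijective c ∧ (∀ z : M ⊗[k] N, d (c z) = z) ∧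
      (∀ w : N ⊗[k] M, c (d w) = w) := by
  classical
  -- facts about the inverse automorphism B⁻¹ and commutation with a, S, μ
  have hBm : ∀ u v : H, B.symm (HH.mul u v) = HH.mul (B.symm u) (B.symm v) := by
    intro u v; apply B.injective; simp [hB.map_mul]
  have hB1 : B.symm HH.one = HH.one := by
    apply B.injective; simp [hB.map_one]
  have hBa : ∀ u : H, B.symm (HH.a u) = HH.a (B.symm u) := by
    intro u; apply B.injective; simp [hB.map_a]
  have hBa' : ∀ u : H, B.symm (HH.a.symm u) = HH.a.symm (B.symm u) := by
    intro u; apply HH.a.injective; rw [← hBa]; simp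
  have hSa' : ∀ u : H, HH.S (HH.a.symm u) = HH.a.symm (HH.S u) := by
    intro u; apply HH.a.injective; rw [← HH.S_a]; simp
  have hmuinv : ∀ (h : H) (mm : M),
      YM.mu.symm (YM.act h mm) = YM.act (HH.a.symm h) (YM.mu.symm mm) := by
    intro h mm; apply YM.mu.injective; rw [YM.mu_act]; simp
  -- counit identity in summed form
  have hcount : ∀ (x : N) (q : ℕ) (n0 : Fin q → N) (n1 : Fin q → H),
      YN.coact x = ∑ l, n0 l ⊗ₜ[k] n1 l →
      ∑ l, HH.counit (n1 l) • n0 l = YN.mu.symm x := by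
    intro x q n0 n1 hrep
    have h0 := YN.coact_counit x
    rw [hrep, map_sum, map_sum] at h0
    simpa using h0
  -- hom-coassociativity of the coaction, in applied form
  have hhomco : ∀ x : N,
      TensorProduct.map YN.coact HH.a.symm.toLinearMap (YN.coact x)
        = (TensorProduct.assoc k N H H).symm
            (TensorProduct.map YN.mu.symm.toLinearMap HH.comul (YN.coact x)) := by
    intro x
    have h0 := LinearMap.congr_fun YN.hom_coact x
    simp only [LinearMap.comp_apply, LinearEquiv.coe_coe] at h0
    rw [h0]; simp
  -- first identity : d ∘ c = id on pure tensors
  have key1 : ∀ (m : M) (x : N), d (c (m ⊗ₜ[k] x)) = m ⊗ₜ[k] x := by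
    intro m x
    obtain ⟨q, n0, n1, hrep⟩ := exists_fin_rep (YN.coact x)
    rw [hc m x q n0 n1 hrep, map_sum]
    have hterm : ∀ l, d (YN.mu (n0 l) ⊗ₜ[k] YM.act (B.symm (n1 l)) (YM.mu.symm m))
        = auxXi YM YN m (YN.coact (n0 l) ⊗ₜ[k] HH.a.symm (n1 l)) := by
      intro l
      obtain ⟨p, y, h, hrep2⟩ := exists_fin_rep (YN.coact (n0 l))
      have hco : YN.coact (YN.mu (n0 l)) = ∑ j, YN.mu (y j) ⊗ₜ[k] HH.a (h j) := by
        rw [YN.coact_mu, hrep2, map_sum]; simp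
      rw [hd (YN.mu (n0 l)) _ p _ _ hco, hrep2, TensorProduct.sum_tmul, map_sum]
      refine Finset.sum_congr rfl fun j _ => ?_
      rw [auxXi_apply]
      congr 1
      rw [auxE_apply, HH.S_a, hBa, hmuinv, YM.hom_act, hBm, hBa']
      simp
    simp only [hterm]
    have hsum : (∑ l, auxXi YM YN m (YN.coact (n0 l) ⊗ₜ[k] HH.a.symm (n1 l)))
        = auxXi YM YN m (TensorProduct.map YN.coact HH.a.symm.toLinearMap (YN.coact x)) := by
      rw [hrep, map_sum, map_sum]
      simp
    rw [hsum, hhomco x, auxXi_assoc_symm, hrep, map_sum, map_sum]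
    have hXev : ∀ l, auxXi' YM YN m
        (TensorProduct.map YN.mu.symm.toLinearMap HH.comul (n0 l ⊗ₜ[k] n1 l))
          = HH.counit (n1 l) • (m ⊗ₜ[k] YN.mu (n0 l)) := by
      intro l
      rw [TensorProduct.map_tmul, auxXi'_apply, auxW_comul, map_smul]
      simp [auxE_apply, hB1, YM.one_act, TensorProduct.smul_tmul']
    simp only [hXev]
    have hfin : ∑ l, HH.counit (n1 l) • (m ⊗ₜ[k] YN.mu (n0 l))
        = m ⊗ₜ[k] YN.mu (∑ l, HH.counit (n1 l) • n0 l) := by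
      rw [map_sum, TensorProduct.tmul_sum]
      simp [TensorProduct.tmul_smul]
    rw [hfin, hcount x q n0 n1 hrep]
    simp
  -- second identity : c ∘ d = id on pure tensors
  have key2 : ∀ (x : N) (m : M), c (d (x ⊗ₜ[k] m)) = x ⊗ₜ[k] m := by
    intro x m
    obtain ⟨q, n0, n1, hrep⟩ := exists_fin_rep (YN.coact x)
    rw [hd x m q n0 n1 hrep, map_sum]
    have hterm : ∀ l, c (YM.act (B.symm (HH.S (n1 l))) (YM.mu.symm m) ⊗ₜ[k] YN.mu (n0 l))
        = auxXi2 YM YN m (YN.coact (n0 l) ⊗ₜ[k] HH.a.symm (n1 l)) := by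
      intro l
      obtain ⟨p, y, h, hrep2⟩ := exists_fin_rep (YN.coact (n0 l))
      have hco : YN.coact (YN.mu (n0 l)) = ∑ j, YN.mu (y j) ⊗ₜ[k] HH.a (h j) := by
        rw [YN.coact_mu, hrep2, map_sum]; simp
      rw [hc _ (YN.mu (n0 l)) p _ _ hco, hrep2, TensorProduct.sum_tmul, map_sum]
      refine Finset.sum_congr rfl fun j _ => ?_
      rw [auxXi2_apply]
      congr 1
      rw [auxE_apply, hBa, hmuinv, YM.hom_act, hSa', hBm, hBa']
      simp
    simp only [hterm]
    have hsum : (∑ l, auxXi2 YM YN m (YN.coact (n0 l) ⊗ₜ[k] HH.a.symm (n1 l)))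
        = auxXi2 YM YN m (TensorProduct.map YN.coact HH.a.symm.toLinearMap (YN.coact x)) := by
      rw [hrep, map_sum, map_sum]
      simp
    rw [hsum, hhomco x, auxXi2_assoc_symm, hrep, map_sum, map_sum]
    have hXev : ∀ l, auxXi2' YM YN m
        (TensorProduct.map YN.mu.symm.toLinearMap HH.comul (n0 l ⊗ₜ[k] n1 l))
          = HH.counit (n1 l) • (YN.mu (n0 l) ⊗ₜ[k] m) := by
      intro l
      rw [TensorProduct.map_tmul, auxXi2'_apply, auxW2_comul, map_smul]
      simp [auxE_apply, hB1, YM.one_act, TensorProduct.tmul_smul]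
    simp only [hXev]
    have hfin : ∑ l, HH.counit (n1 l) • (YN.mu (n0 l) ⊗ₜ[k] m)
        = YN.mu (∑ l, HH.counit (n1 l) • n0 l) ⊗ₜ[k] m := by
      rw [map_sum, TensorProduct.sum_tmul]
      simp [TensorProduct.smul_tmul']
    rw [hfin, hcount x q n0 n1 hrep]
    simp
  have hdc : ∀ z : M ⊗[k] N, d (c z) = z := by
    intro z
    induction z using TensorProduct.induction_on with
    | zero => simp
    | tmul m x => exact key1 m x
    | add u v hu hv => simp [map_add, hu, hv]
  have hcd : ∀ w : N ⊗[k] M, c (d w) = w := by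
    intro w
    induction w using TensorProduct.induction_on with
    | zero => simp
    | tmul x m => exact key2 x m
    | add u v hu hv => simp [map_add, hu, hv]
  exact ⟨⟨Function.LeftInverse.injective hdc, Function.RightInverse.surjective hcd⟩, hdc, hcd⟩
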